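/- Let (R,B,L) satisfy R^n b · l ∈ ℤ for all n ∈ ℕ, b ∈ B, l ∈ L, and suppose N^{-1/2}(e^{2πi b·l}) is unitary. Let μ satisfy μ̂(t) = χ_B(t) μ̂(R*^{-1}t) and P as above. Then Q(t) := Σ_{λ∈P}|μ̂(t−λ)|² satisfies the functional identity Q(t) = Σ_{l∈L} |χ_B(t−l)|² Q(R*^{-1}(t−l)) for all t ∈ ℝ^ν. -/

import Mathlib

open MeasureTheory Matrix

/-- `χ_B(t) = N^{-1} Σ_{b∈B} e^{2πi b·t}` (with `N = #B`). -/
noncomputable def chiB {ν : ℕ} (B : Finset (Fin ν → ℝ)) (t : Fin ν → ℝ) : ℂ :=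
  (B.card : ℂ)⁻¹ * ∑ b ∈ B,
    Complex.exp ((((2 : ℝ) * Real.pi * ∑ i, b i * t i : ℝ) : ℂ) * Complex.I)

/-- Fourier transform `μ̂(t) = ∫ e^{2πi t·x} dμ(x)`. -/
noncomputable def muHatPi {ν : ℕ} (μ : Measure (Fin ν → ℝ)) (t : Fin ν → ℝ) : ℂ :=
  ∫ x, Complex.exp ((((2 : ℝ) * Real.pi * ∑ i, t i * x i : ℝ) : ℂ) * Complex.I) ∂μ

/-- `P(L) = { l₀ + R*l₁ + R*²l₂ + ⋯ : lᵢ ∈ L, finite sums }` for a matrix `R*`. -/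
def PsetL {ν : ℕ} (Rt : Matrix (Fin ν) (Fin ν) ℝ) (L : Finset (Fin ν → ℝ)) :
    Set (Fin ν → ℝ) :=
  {lam | ∃ (n : ℕ) (l : ℕ → (Fin ν → ℝ)), (∀ i, l i ∈ L) ∧
    lam = ∑ i ∈ Finset.range n, (Rt ^ i).mulVec (l i)}

/-- `Q(t) = Σ_{λ∈P} |μ̂(t−λ)|²`. -/
noncomputable def Qfun {ν : ℕ} (μ : Measure (Fin ν → ℝ)) (P : Set (Fin ν → ℝ))
    (t : Fin ν → ℝ) : ℝ :=
  ∑' lam : P, ‖muHatPi μ (t - (lam : Fin ν → ℝ))‖ ^ 2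

namespace QFI

/-- The basic exponential `e^{2πi s·x}`. -/
noncomputable def EE {ν : ℕ} (s x : Fin ν → ℝ) : ℂ :=
  Complex.exp ((((2 : ℝ) * Real.pi * ∑ i, s i * x i : ℝ) : ℂ) * Complex.I)

variable {ν : ℕ}

lemma chiB_eq (B : Finset (Fin ν → ℝ)) (t : Fin ν → ℝ) :
    chiB B t = (B.card : ℂ)⁻¹ * ∑ b ∈ B, EE b t := rfl

lemma muHat_eq (μ : Measure (Fin ν → ℝ)) (t : Fin ν → ℝ) :
    muHatPi μ t = ∫ x, EE t x ∂μ := rfl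

lemma EE_swap (s x : Fin ν → ℝ) : EE s x = EE x s := by
  unfold EE
  have h : ∑ i, s i * x i = ∑ i, x i * s i := Finset.sum_congr rfl fun i _ => mul_comm _ _
  rw [h]

lemma EE_add_left (s s' x : Fin ν → ℝ) : EE (s + s') x = EE s x * EE s' x := by
  unfold EE
  rw [← Complex.exp_add]
  congr 1
  have h : ∑ i, (s + s') i * x i = (∑ i, s i * x i) + ∑ i, s' i * x i := by
    rw [← Finset.sum_add_distrib]
    exact Finset.sum_congr rfl fun i _ => by simp [add_mul]
  rw [h]
  push_cast
  ring

lemma EE_conj (s x : Fin ν → ℝ) : (starRingEnd ℂ) (EE s x) = EE (-s) x := by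
  unfold EE
  rw [← Complex.exp_conj, _root_.map_mul, Complex.conj_I, Complex.conj_ofReal]
  congr 1
  have h : ∑ i, (-s) i * x i = -∑ i, s i * x i := by
    simp [neg_mul]
  rw [h]
  push_cast
  ring

lemma EE_neg_neg (s x : Fin ν → ℝ) : EE (-s) x = EE s (-x) := by
  unfold EE
  have h : ∑ i, (-s) i * x i = ∑ i, s i * (-x) i :=
    Finset.sum_congr rfl fun i _ => by simp
  rw [h]

lemma EE_zero_left (x : Fin ν → ℝ) : EE (0 : Fin ν → ℝ) x = 1 := by
  unfold EE
  simp

lemma EE_sub_left (s s' x : Fin ν → ℝ) :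
    EE (s - s') x = EE s x * (starRingEnd ℂ) (EE s' x) := by
  rw [EE_conj, ← EE_add_left, sub_eq_add_neg]

lemma EE_conj_right (s x : Fin ν → ℝ) : (starRingEnd ℂ) (EE s x) = EE s (-x) := by
  rw [EE_conj, EE_neg_neg]

lemma EE_add_right (s x y : Fin ν → ℝ) : EE s (x + y) = EE s x * EE s y := by
  rw [EE_swap, EE_add_left, EE_swap, EE_swap y]

lemma EE_sub_right (s x y : Fin ν → ℝ) :
    EE s (x - y) = EE s x * (starRingEnd ℂ) (EE s y) := by
  rw [EE_conj_right, ← EE_add_right, sub_eq_add_neg]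

lemma norm_EE (s x : Fin ν → ℝ) : ‖EE s x‖ = 1 := by
  unfold EE
  rw [Complex.norm_exp_ofReal_mul_I]

lemma EE_int {s x : Fin ν → ℝ} (h : ∃ k : ℤ, ∑ i, s i * x i = (k : ℝ)) :
    EE s x = 1 := by
  obtain ⟨k, hk⟩ := h
  unfold EE
  rw [hk]
  have h2 : ((((2 : ℝ) * Real.pi * (k : ℝ)) : ℝ) : ℂ) * Complex.I
      = (k : ℂ) * (2 * (Real.pi : ℂ) * Complex.I) := by
    push_cast
    ring
  rw [h2, Complex.exp_int_mul_two_pi_mul_I]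

lemma continuous_EE (s : Fin ν → ℝ) : Continuous fun x => EE s x := by
  unfold EE
  fun_prop

lemma integrable_EE (μ : Measure (Fin ν → ℝ)) [IsProbabilityMeasure μ] (s : Fin ν → ℝ) :
    Integrable (fun x => EE s x) μ := by
  refine (integrable_const (1 : ℝ)).mono' (continuous_EE s).aestronglyMeasurable ?_
  exact Filter.Eventually.of_forall fun x => by rw [norm_EE]

lemma muHat_zero (μ : Measure (Fin ν → ℝ)) [IsProbabilityMeasure μ] :
    muHatPi μ (0 : Fin ν → ℝ) = 1 := by
  rw [muHat_eq]
  simp_rw [EE_zero_left]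
  simp

lemma muHat_neg (μ : Measure (Fin ν → ℝ)) (s : Fin ν → ℝ) :
    muHatPi μ (-s) = (starRingEnd ℂ) (muHatPi μ s) := by
  rw [muHat_eq, muHat_eq, ← integral_conj]
  congr 1
  funext x
  rw [EE_conj]

lemma intC_mul_EE (μ : Measure (Fin ν → ℝ)) (c : ℂ) (u : Fin ν → ℝ) :
    ∫ x, c * EE u x ∂μ = c * muHatPi μ u := by
  rw [muHat_eq]
  simpa [smul_eq_mul] using integral_smul c (fun x => EE u x)

/- ### linear algebra helpers -/

lemma mulVec_sum_comm {α : Type*} (Rt : Matrix (Fin ν) (Fin ν) ℝ) (s : Finset α)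
    (g : α → (Fin ν → ℝ)) :
    Rt.mulVec (∑ i ∈ s, g i) = ∑ i ∈ s, Rt.mulVec (g i) := by
  simp only [← Matrix.mulVecLin_apply, _root_.map_sum]

lemma dot_sum_comm {α : Type*} (v : Fin ν → ℝ) (s : Finset α) (g : α → (Fin ν → ℝ)) :
    v ⬝ᵥ (∑ i ∈ s, g i) = ∑ i ∈ s, v ⬝ᵥ (g i) := by
  simp only [dotProduct, Finset.sum_apply, Finset.mul_sum]
  rw [Finset.sum_comm]

lemma pow_mulVec_succ (Rt : Matrix (Fin ν) (Fin ν) ℝ) (i : ℕ) (v : Fin ν → ℝ) :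
    (Rt ^ (i + 1)).mulVec v = Rt.mulVec ((Rt ^ i).mulVec v) := by
  rw [Matrix.mulVec_mulVec, ← pow_succ']

lemma sum_succ_decomp (Rt : Matrix (Fin ν) (Fin ν) ℝ) (m : ℕ) (F : ℕ → (Fin ν → ℝ)) :
    ∑ i ∈ Finset.range (m + 1), (Rt ^ i).mulVec (F i)
      = F 0 + Rt.mulVec (∑ i ∈ Finset.range m, (Rt ^ i).mulVec (F (i + 1))) := by
  rw [Finset.sum_range_succ', pow_zero, Matrix.one_mulVec, mulVec_sum_comm, add_comm]
  congr 1
  exact Finset.sum_congr rfl fun i _ => pow_mulVec_succ Rt i (F (i + 1))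

/- ### P set lemmas -/

lemma mem_P_zero (Rt : Matrix (Fin ν) (Fin ν) ℝ) {L : Finset (Fin ν → ℝ)}
    (h0L : (0 : Fin ν → ℝ) ∈ L) : (0 : Fin ν → ℝ) ∈ PsetL Rt L :=
  ⟨0, fun _ => 0, fun _ => h0L, by simp⟩

lemma mem_P_step {Rt : Matrix (Fin ν) (Fin ν) ℝ} {L : Finset (Fin ν → ℝ)}
    {l lam : Fin ν → ℝ} (hl : l ∈ L) (hlam : lam ∈ PsetL Rt L) :
    l + Rt.mulVec lam ∈ PsetL Rt L := by
  obtain ⟨n, f, hf, rfl⟩ := hlam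
  refine ⟨n + 1, fun i => if i = 0 then l else f (i - 1), fun i => ?_, ?_⟩
  · dsimp only
    split
    · exact hl
    · exact hf _
  · rw [sum_succ_decomp]
    simp only [if_pos rfl, Nat.add_sub_cancel]
    congr 2

lemma mem_P_decomp {Rt : Matrix (Fin ν) (Fin ν) ℝ} {L : Finset (Fin ν → ℝ)}
    (h0L : (0 : Fin ν → ℝ) ∈ L) {lam : Fin ν → ℝ} (hlam : lam ∈ PsetL Rt L) :
    ∃ l ∈ L, ∃ lam' ∈ PsetL Rt L, lam = l + Rt.mulVec lam' := by
  obtain ⟨n, f, hf, rfl⟩ := hlam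
  cases n with
  | zero =>
      refine ⟨0, h0L, 0, mem_P_zero Rt h0L, ?_⟩
      simp
  | succ m =>
      exact ⟨f 0, hf 0, ∑ i ∈ Finset.range m, (Rt ^ i).mulVec (f (i + 1)),
        ⟨m, fun i => f (i + 1), fun i => hf _, rfl⟩, sum_succ_decomp Rt m f⟩

lemma dot_pow_transpose (R : Matrix (Fin ν) (Fin ν) ℝ) (i : ℕ) (b v : Fin ν → ℝ) :
    (R.mulVec b) ⬝ᵥ ((R.transpose ^ i).mulVec v) = ((R ^ (i + 1)).mulVec b) ⬝ᵥ v := by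
  rw [← Matrix.transpose_pow, Matrix.dotProduct_mulVec, Matrix.vecMul_transpose,
    Matrix.mulVec_mulVec, ← pow_succ]

lemma dot_int_P {R : Matrix (Fin ν) (Fin ν) ℝ} {B L : Finset (Fin ν → ℝ)}
    (hcompat : ∀ n : ℕ, 0 < n → ∀ b ∈ B, ∀ l ∈ L,
      ∃ k : ℤ, (∑ i, (R ^ n).mulVec b i * l i) = (k : ℝ))
    {lam : Fin ν → ℝ} (hlam : lam ∈ PsetL R.transpose L)
    {b : Fin ν → ℝ} (hb : b ∈ B) :
    ∃ k : ℤ, (R.mulVec b) ⬝ᵥ lam = (k : ℝ) := by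
  obtain ⟨n, f, hf, rfl⟩ := hlam
  have H : ∀ i : ℕ, ∃ k : ℤ, (R.mulVec b) ⬝ᵥ ((R.transpose ^ i).mulVec (f i)) = (k : ℝ) := by
    intro i
    rw [dot_pow_transpose]
    exact hcompat (i + 1) (Nat.succ_pos i) b hb (f i) (hf i)
  choose g hg using H
  refine ⟨∑ i ∈ Finset.range n, g i, ?_⟩
  rw [dot_sum_comm]
  rw [Finset.sum_congr rfl fun i _ => hg i]
  push_cast
  rfl

lemma dot_eq_sum (b t : Fin ν → ℝ) : (∑ i, b i * t i) = b ⬝ᵥ t := rfl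

lemma EE_Rt_one {R : Matrix (Fin ν) (Fin ν) ℝ} {B L : Finset (Fin ν → ℝ)}
    (hcompat : ∀ n : ℕ, 0 < n → ∀ b ∈ B, ∀ l ∈ L,
      ∃ k : ℤ, (∑ i, (R ^ n).mulVec b i * l i) = (k : ℝ))
    {lam : Fin ν → ℝ} (hlam : lam ∈ PsetL R.transpose L)
    {b : Fin ν → ℝ} (hb : b ∈ B) :
    EE b (R.transpose.mulVec lam) = 1 := by
  apply EE_int
  obtain ⟨k, hk⟩ := dot_int_P hcompat hlam hb
  refine ⟨k, ?_⟩
  rw [dot_eq_sum, Matrix.dotProduct_mulVec, Matrix.vecMul_transpose]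
  exact hk

lemma chiB_shift {R : Matrix (Fin ν) (Fin ν) ℝ} {B L : Finset (Fin ν → ℝ)}
    (hcompat : ∀ n : ℕ, 0 < n → ∀ b ∈ B, ∀ l ∈ L,
      ∃ k : ℤ, (∑ i, (R ^ n).mulVec b i * l i) = (k : ℝ))
    {lam : Fin ν → ℝ} (hlam : lam ∈ PsetL R.transpose L) (s : Fin ν → ℝ) :
    chiB B (s - R.transpose.mulVec lam) = chiB B s := by
  rw [chiB_eq, chiB_eq]
  congr 1
  refine Finset.sum_congr rfl fun b hb => ?_
  rw [EE_sub_right, EE_Rt_one hcompat hlam hb, _root_.map_one, mul_one]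

/- ### separation from the Hadamard condition -/

lemma sep {B L : Finset (Fin ν → ℝ)} {N : ℕ} (hB : B.card = N) (hN : 0 < N)
    (hH : ∀ l ∈ L, ∀ l' ∈ L, l ≠ l' →
      ∑ b ∈ B, Complex.exp ((((2 : ℝ) * Real.pi * ∑ i, b i * (l i - l' i) : ℝ) : ℂ)
        * Complex.I) = 0)
    {l l' : Fin ν → ℝ} (hl : l ∈ L) (hl' : l' ∈ L)
    (hint : ∀ b ∈ B, ∃ k : ℤ, (∑ i, b i * (l i - l' i)) = (k : ℝ)) :
    l = l' := by
  by_contra hne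
  have h0 := hH l hl l' hl' hne
  have h1 : ∀ b ∈ B, Complex.exp ((((2 : ℝ) * Real.pi * ∑ i, b i * (l i - l' i) : ℝ) : ℂ)
      * Complex.I) = 1 := by
    intro b hb
    exact EE_int (s := b) (x := l - l') (by simpa using hint b hb)
  rw [Finset.sum_congr rfl h1, Finset.sum_const, hB] at h0
  simp only [nsmul_eq_mul, mul_one, Nat.cast_eq_zero] at h0
  omega

/- ### the QMF identity `Σ_l |χ_B(s-l)|² = 1` -/

lemma cross_EE (b b' s l : Fin ν → ℝ) :
    EE b (s - l) * EE b' (l - s) = EE (b - b') s * EE (b' - b) l := by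
  have h : EE b' (l - s) = EE b' l * (starRingEnd ℂ) (EE b' s) := EE_sub_right b' l s
  rw [EE_sub_right b s l, h, EE_sub_left b b' s, EE_sub_left b' b l]
  ring

lemma row_orth {B L : Finset (Fin ν → ℝ)} {N : ℕ} (hB : B.card = N) (hL : L.card = N)
    (hN : 0 < N)
    (hH : ∀ l ∈ L, ∀ l' ∈ L, l ≠ l' →
      ∑ b ∈ B, Complex.exp ((((2 : ℝ) * Real.pi * ∑ i, b i * (l i - l' i) : ℝ) : ℂ)
        * Complex.I) = 0) :
    ∀ b ∈ B, ∀ b' ∈ B, ∑ l ∈ L, EE ((b : Fin ν → ℝ) - b') l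
      = if b = b' then (N : ℂ) else 0 := by
  have hNC : (N : ℂ) ≠ 0 := Nat.cast_ne_zero.2 hN.ne'
  classical
  let σ : {x // x ∈ B} ≃ {x // x ∈ L} :=
    Fintype.equivOfCardEq (by rw [Fintype.card_coe, Fintype.card_coe, hB, hL])
  let M : Matrix {x // x ∈ B} {x // x ∈ B} ℂ := fun b b' => EE (b : Fin ν → ℝ) (σ b' : Fin ν → ℝ)
  have h1 : M.conjTranspose * M = (N : ℂ) • 1 := by
    ext b' b''
    rw [Matrix.mul_apply]
    simp only [Matrix.conjTranspose_apply, Matrix.smul_apply, Matrix.one_apply, smul_eq_mul]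
    by_cases h : b' = b''
    · subst h
      have hterm : ∀ b : {x // x ∈ B}, star (M b b') * M b b' = 1 := by
        intro b
        show (starRingEnd ℂ) (EE (b : Fin ν → ℝ) (σ b' : Fin ν → ℝ))
            * EE (b : Fin ν → ℝ) (σ b' : Fin ν → ℝ) = 1
        rw [mul_comm, ← EE_sub_right, sub_self, EE_swap, EE_zero_left]
      rw [Finset.sum_congr rfl fun b _ => hterm b, Finset.sum_const, Finset.card_univ,
        Fintype.card_coe, hB, if_pos rfl, nsmul_eq_mul, mul_one]
    · have hterm : ∀ b : {x // x ∈ B},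
          star (M b b') * M b b'' = EE (b : Fin ν → ℝ) ((σ b'' : Fin ν → ℝ) - (σ b' : Fin ν → ℝ)) := by
        intro b
        show (starRingEnd ℂ) (EE (b : Fin ν → ℝ) (σ b' : Fin ν → ℝ))
            * EE (b : Fin ν → ℝ) (σ b'' : Fin ν → ℝ) = _
        rw [EE_sub_right]
        ring
      rw [Finset.sum_congr rfl fun b _ => hterm b, if_neg h, mul_zero]
      have hll : ((σ b'' : Fin ν → ℝ)) ≠ ((σ b' : Fin ν → ℝ)) := by
        intro hc
        exact h (σ.injective (Subtype.coe_injective hc)).symm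
      have := hH (σ b'') (σ b'').2 (σ b') (σ b').2 hll
      rw [Finset.sum_coe_sort B (fun b => EE b ((σ b'' : Fin ν → ℝ) - (σ b' : Fin ν → ℝ)))]
      exact this
  have h2 : M * M.conjTranspose = (N : ℂ) • 1 := by
    have e1 : ((N : ℂ)⁻¹ • M.conjTranspose) * M = 1 := by
      rw [Matrix.smul_mul, h1, smul_smul, inv_mul_cancel₀ hNC, one_smul]
    have e2 := mul_eq_one_comm.mp e1
    rw [Matrix.mul_smul] at e2
    calc M * M.conjTranspose
        = (N : ℂ) • ((N : ℂ)⁻¹ • (M * M.conjTranspose)) := by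
          rw [smul_smul, mul_inv_cancel₀ hNC, one_smul]
      _ = (N : ℂ) • 1 := by rw [e2]
  intro b hb b' hb'
  have h3 : (M * M.conjTranspose) ⟨b, hb⟩ ⟨b', hb'⟩
      = ((N : ℂ) • (1 : Matrix {x // x ∈ B} {x // x ∈ B} ℂ)) ⟨b, hb⟩ ⟨b', hb'⟩ := by
    rw [h2]
  rw [Matrix.mul_apply] at h3
  simp only [Matrix.conjTranspose_apply, Matrix.smul_apply, Matrix.one_apply, smul_eq_mul] at h3
  have hterm : ∀ b'' : {x // x ∈ B},
      M ⟨b, hb⟩ b'' * star (M ⟨b', hb'⟩ b'') = EE (b - b') (σ b'' : Fin ν → ℝ) := by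
    intro b''
    show EE b (σ b'' : Fin ν → ℝ) * (starRingEnd ℂ) (EE b' (σ b'' : Fin ν → ℝ)) = _
    rw [EE_sub_left]
  rw [Finset.sum_congr rfl fun b'' _ => hterm b''] at h3
  rw [Equiv.sum_comp σ (fun l : {x // x ∈ L} => EE (b - b') (l : Fin ν → ℝ))] at h3
  rw [Finset.sum_coe_sort L (fun l => EE (b - b') l)] at h3
  rw [h3]
  by_cases h : b = b'
  · rw [if_pos h, if_pos (Subtype.ext h), mul_one]
  · rw [if_neg h, if_neg (fun hc => h (Subtype.ext_iff.mp hc)), mul_zero]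

lemma QMF {B L : Finset (Fin ν → ℝ)} {N : ℕ} (hB : B.card = N) (hL : L.card = N)
    (hN : 0 < N)
    (hH : ∀ l ∈ L, ∀ l' ∈ L, l ≠ l' →
      ∑ b ∈ B, Complex.exp ((((2 : ℝ) * Real.pi * ∑ i, b i * (l i - l' i) : ℝ) : ℂ)
        * Complex.I) = 0)
    (s : Fin ν → ℝ) :
    ∑ l ∈ L, ‖chiB B (s - l)‖ ^ 2 = 1 := by
  have hNC : (N : ℂ) ≠ 0 := Nat.cast_ne_zero.2 hN.ne'
  set c : ℂ := ((B.card : ℂ))⁻¹ with hc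
  have hconjc : (starRingEnd ℂ) c = c := by
    rw [hc, _root_.map_inv₀, Complex.conj_natCast]
  have step1 : ∀ l : Fin ν → ℝ, chiB B (s - l) * (starRingEnd ℂ) (chiB B (s - l))
      = c ^ 2 * ∑ b ∈ B, ∑ b' ∈ B, EE (b - b') s * EE (b' - b) l := by
    intro l
    have hS : (starRingEnd ℂ) (∑ b' ∈ B, EE b' (s - l)) = ∑ b' ∈ B, EE b' (l - s) := by
      rw [_root_.map_sum]
      refine Finset.sum_congr rfl fun b' _ => ?_
      rw [EE_conj_right, neg_sub]
    calc chiB B (s - l) * (starRingEnd ℂ) (chiB B (s - l))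
        = (c * ∑ b ∈ B, EE b (s - l)) * (c * ∑ b' ∈ B, EE b' (l - s)) := by
          rw [chiB_eq, _root_.map_mul, hconjc, hS]
      _ = c ^ 2 * ((∑ b ∈ B, EE b (s - l)) * (∑ b' ∈ B, EE b' (l - s))) := by ring
      _ = c ^ 2 * ∑ b ∈ B, ∑ b' ∈ B, EE b (s - l) * EE b' (l - s) := by
          rw [Finset.sum_mul_sum]
      _ = c ^ 2 * ∑ b ∈ B, ∑ b' ∈ B, EE (b - b') s * EE (b' - b) l := by
          congr 1
          exact Finset.sum_congr rfl fun b _ =>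
            Finset.sum_congr rfl fun b' _ => cross_EE b b' s l
  have key : ∑ l ∈ L, (chiB B (s - l) * (starRingEnd ℂ) (chiB B (s - l))) = 1 := by
    rw [Finset.sum_congr rfl fun l _ => step1 l, ← Finset.mul_sum, Finset.sum_comm]
    have inner : ∀ b ∈ B, (∑ l ∈ L, ∑ b' ∈ B, EE (b - b') s * EE (b' - b) l) = (N : ℂ) := by
      intro b hb
      rw [Finset.sum_comm]
      have h4 : ∀ b' ∈ B, ∑ l ∈ L, EE (b - b') s * EE (b' - b) l
          = EE (b - b') s * (if b' = b then (N : ℂ) else 0) := by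
        intro b' hb'
        rw [← Finset.mul_sum, row_orth hB hL hN hH b' hb' b hb]
      rw [Finset.sum_congr rfl h4]
      rw [Finset.sum_eq_single_of_mem b hb]
      · rw [if_pos rfl, sub_self, EE_zero_left, one_mul]
      · intro b' _ hbb'
        rw [if_neg hbb', mul_zero]
    rw [Finset.sum_congr rfl inner, Finset.sum_const, hB]
    simp only [nsmul_eq_mul]
    rw [hc, hB]
    field_simp
  have keyR : ((∑ l ∈ L, ‖chiB B (s - l)‖ ^ 2 : ℝ) : ℂ) = 1 := by
    rw [← key]
    push_cast
    refine Finset.sum_congr rfl fun l _ => ?_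
    rw [Complex.mul_conj]
    norm_cast
    rw [Complex.sq_norm]
  exact_mod_cast keyR

/- ### orthogonality (invertible case) -/

lemma orth {R : Matrix (Fin ν) (Fin ν) ℝ} {B L : Finset (Fin ν → ℝ)} {N : ℕ}
    (hB : B.card = N) (hN : 0 < N)
    (hcompat : ∀ n : ℕ, 0 < n → ∀ b ∈ B, ∀ l ∈ L,
      ∃ k : ℤ, (∑ i, (R ^ n).mulVec b i * l i) = (k : ℝ))
    (hH : ∀ l ∈ L, ∀ l' ∈ L, l ≠ l' →
      ∑ b ∈ B, Complex.exp ((((2 : ℝ) * Real.pi * ∑ i, b i * (l i - l' i) : ℝ) : ℂ)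
        * Complex.I) = 0)
    (μ : Measure (Fin ν → ℝ)) [IsProbabilityMeasure μ]
    (hμhat : ∀ t : Fin ν → ℝ,
      muHatPi μ t = chiB B t * muHatPi μ ((R.transpose)⁻¹.mulVec t))
    (hinv : IsUnit R.transpose.det) :
    ∀ (n : ℕ) (f g : ℕ → (Fin ν → ℝ)), (∀ i, f i ∈ L) → (∀ i, g i ∈ L) →
      (∑ i ∈ Finset.range n, (R.transpose ^ i).mulVec (f i - g i)) ≠ 0 →
      muHatPi μ (∑ i ∈ Finset.range n, (R.transpose ^ i).mulVec (f i - g i)) = 0 := by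
  intro n
  induction n with
  | zero =>
      intro f g _ _ hne
      simp at hne
  | succ m ih =>
      intro f g hf hg hne
      have hd : (∑ i ∈ Finset.range (m + 1), (R.transpose ^ i).mulVec (f i - g i))
          = (f 0 - g 0) + R.transpose.mulVec
              (∑ i ∈ Finset.range m, (R.transpose ^ i).mulVec (f (i + 1) - g (i + 1))) :=
        sum_succ_decomp R.transpose m (fun i => f i - g i)
      set d' := ∑ i ∈ Finset.range m, (R.transpose ^ i).mulVec (f (i + 1) - g (i + 1)) with hd'
      have hd'split : d' = (∑ i ∈ Finset.range m, (R.transpose ^ i).mulVec (f (i + 1)))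
          - (∑ i ∈ Finset.range m, (R.transpose ^ i).mulVec (g (i + 1))) := by
        rw [hd', ← Finset.sum_sub_distrib]
        exact Finset.sum_congr rfl fun i _ => Matrix.mulVec_sub _ _ _
      by_cases h0 : f 0 = g 0
      · have hd2 : (∑ i ∈ Finset.range (m + 1), (R.transpose ^ i).mulVec (f i - g i))
            = R.transpose.mulVec d' := by
          rw [hd, h0, sub_self, zero_add]
        have hd'ne : d' ≠ 0 := by
          intro hc
          apply hne
          rw [hd2, hc, Matrix.mulVec_zero]
        have hih := ih (fun i => f (i + 1)) (fun i => g (i + 1)) (fun i => hf _)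
          (fun i => hg _) hd'ne
        rw [hd2, hμhat]
        have hccl : (R.transpose)⁻¹.mulVec (R.transpose.mulVec d') = d' := by
          rw [Matrix.mulVec_mulVec, Matrix.nonsing_inv_mul _ hinv, Matrix.one_mulVec]
        rw [hccl, hih, mul_zero]
      · rw [hμhat]
        have hchi : chiB B (∑ i ∈ Finset.range (m + 1), (R.transpose ^ i).mulVec (f i - g i))
            = 0 := by
          rw [chiB_eq]
          have hterm : ∀ b ∈ B,
              EE b (∑ i ∈ Finset.range (m + 1), (R.transpose ^ i).mulVec (f i - g i))
                = EE b (f 0 - g 0) := by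
            intro b hb
            rw [hd, EE_add_right]
            have h1 : EE b (R.transpose.mulVec d') = 1 := by
              apply EE_int
              rw [dot_eq_sum, Matrix.dotProduct_mulVec, Matrix.vecMul_transpose]
              obtain ⟨k1, hk1⟩ := dot_int_P hcompat
                (⟨m, fun i => f (i + 1), fun i => hf _, rfl⟩ :
                  (∑ i ∈ Finset.range m, (R.transpose ^ i).mulVec (f (i + 1))) ∈
                    PsetL R.transpose L) hb
              obtain ⟨k2, hk2⟩ := dot_int_P hcompat
                (⟨m, fun i => g (i + 1), fun i => hg _, rfl⟩ :
                  (∑ i ∈ Finset.range m, (R.transpose ^ i).mulVec (g (i + 1))) ∈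
                    PsetL R.transpose L) hb
              refine ⟨k1 - k2, ?_⟩
              rw [hd'split, dotProduct_sub, hk1, hk2]
              push_cast
              ring
            rw [h1, mul_one]
          rw [Finset.sum_congr rfl hterm]
          have := hH (f 0) (hf 0) (g 0) (hg 0) h0
          rw [show (∑ b ∈ B, EE b (f 0 - g 0)) = ∑ b ∈ B,
            Complex.exp ((((2 : ℝ) * Real.pi * ∑ i, b i * (f 0 i - g 0 i) : ℝ) : ℂ)
              * Complex.I) from rfl, this, mul_zero]
        rw [hchi, zero_mul]

lemma orthP {R : Matrix (Fin ν) (Fin ν) ℝ} {B L : Finset (Fin ν → ℝ)} {N : ℕ}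
    (hB : B.card = N) (hN : 0 < N) (h0L : (0 : Fin ν → ℝ) ∈ L)
    (hcompat : ∀ n : ℕ, 0 < n → ∀ b ∈ B, ∀ l ∈ L,
      ∃ k : ℤ, (∑ i, (R ^ n).mulVec b i * l i) = (k : ℝ))
    (hH : ∀ l ∈ L, ∀ l' ∈ L, l ≠ l' →
      ∑ b ∈ B, Complex.exp ((((2 : ℝ) * Real.pi * ∑ i, b i * (l i - l' i) : ℝ) : ℂ)
        * Complex.I) = 0)
    (μ : Measure (Fin ν → ℝ)) [IsProbabilityMeasure μ]
    (hμhat : ∀ t : Fin ν → ℝ,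
      muHatPi μ t = chiB B t * muHatPi μ ((R.transpose)⁻¹.mulVec t))
    (hinv : IsUnit R.transpose.det) :
    ∀ lam ∈ PsetL R.transpose L, ∀ lam' ∈ PsetL R.transpose L, lam ≠ lam' →
      muHatPi μ (lam - lam') = 0 := by
  intro lam hlam lam' hlam' hne
  obtain ⟨n, f, hf, rfl⟩ := hlam
  obtain ⟨m, g, hg, rfl⟩ := hlam'
  classical
  set K := max n m with hK
  set F : ℕ → (Fin ν → ℝ) := fun i => if i < n then f i else 0 with hF
  set G : ℕ → (Fin ν → ℝ) := fun i => if i < m then g i else 0 with hG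
  have hFL : ∀ i, F i ∈ L := fun i => by
    rw [hF]; dsimp only; split
    · exact hf i
    · exact h0L
  have hGL : ∀ i, G i ∈ L := fun i => by
    rw [hG]; dsimp only; split
    · exact hg i
    · exact h0L
  have h1 : ∑ i ∈ Finset.range K, (R.transpose ^ i).mulVec (F i)
      = ∑ i ∈ Finset.range n, (R.transpose ^ i).mulVec (f i) := by
    rw [← Finset.sum_subset (Finset.range_subset_range.2 (le_max_left n m))]
    · exact Finset.sum_congr rfl fun i hi => by
        rw [hF]; dsimp only; rw [if_pos (Finset.mem_range.1 hi)]
    · intro i _ hi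
      rw [hF]; dsimp only
      rw [if_neg (fun hc => hi (Finset.mem_range.2 hc)), Matrix.mulVec_zero]
  have h2 : ∑ i ∈ Finset.range K, (R.transpose ^ i).mulVec (G i)
      = ∑ i ∈ Finset.range m, (R.transpose ^ i).mulVec (g i) := by
    rw [← Finset.sum_subset (Finset.range_subset_range.2 (le_max_right n m))]
    · exact Finset.sum_congr rfl fun i hi => by
        rw [hG]; dsimp only; rw [if_pos (Finset.mem_range.1 hi)]
    · intro i _ hi
      rw [hG]; dsimp only
      rw [if_neg (fun hc => hi (Finset.mem_range.2 hc)), Matrix.mulVec_zero]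
  have h3 : ∑ i ∈ Finset.range K, (R.transpose ^ i).mulVec (F i - G i)
      = (∑ i ∈ Finset.range n, (R.transpose ^ i).mulVec (f i))
        - (∑ i ∈ Finset.range m, (R.transpose ^ i).mulVec (g i)) := by
    rw [← h1, ← h2, ← Finset.sum_sub_distrib]
    exact Finset.sum_congr rfl fun i _ => Matrix.mulVec_sub _ _ _
  have h4 := orth hB hN hcompat hH μ hμhat hinv K F G hFL hGL
    (by rw [h3]; exact sub_ne_zero.mpr hne)
  rw [h3] at h4
  exact h4

/- ### Bessel inequality and summability -/

lemma bessel {Pset : Set (Fin ν → ℝ)} (μ : Measure (Fin ν → ℝ)) [IsProbabilityMeasure μ]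
    (horth : ∀ lam ∈ Pset, ∀ lam' ∈ Pset, lam ≠ lam' → muHatPi μ (lam - lam') = 0)
    (t : Fin ν → ℝ) (F : Finset ↥Pset) :
    ∑ lam ∈ F, ‖muHatPi μ (t - (lam : Fin ν → ℝ))‖ ^ 2 ≤ 1 := by
  classical
  set a : ↥Pset → ℂ := fun lam => muHatPi μ (t - (lam : Fin ν → ℝ)) with ha
  set v : (Fin ν → ℝ) → ℂ :=
    fun x => EE t x - ∑ lam ∈ F, a lam * EE (lam : Fin ν → ℝ) x with hv
  have hpt : ∀ x, v x * (starRingEnd ℂ) (v x)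
      = (1 : ℂ) - (∑ lam ∈ F, (starRingEnd ℂ) (a lam) * EE (t - (lam : Fin ν → ℝ)) x)
        - (∑ lam ∈ F, a lam * EE ((lam : Fin ν → ℝ) - t) x)
        + ∑ lam ∈ F, ∑ lam' ∈ F,
            (a lam * (starRingEnd ℂ) (a lam')) * EE ((lam : Fin ν → ℝ) - (lam' : Fin ν → ℝ)) x := by
    intro x
    rw [hv]
    dsimp only
    rw [_root_.map_sub, _root_.map_sum]
    have e1 : EE t x * (starRingEnd ℂ) (EE t x) = 1 := by
      rw [← EE_sub_left, sub_self, EE_zero_left]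
    have e2 : EE t x * (∑ lam ∈ F, (starRingEnd ℂ) (a lam * EE (lam : Fin ν → ℝ) x))
        = ∑ lam ∈ F, (starRingEnd ℂ) (a lam) * EE (t - (lam : Fin ν → ℝ)) x := by
      rw [Finset.mul_sum]
      refine Finset.sum_congr rfl fun lam _ => ?_
      rw [_root_.map_mul, EE_sub_left]
      ring
    have e3 : (∑ lam ∈ F, a lam * EE (lam : Fin ν → ℝ) x) * (starRingEnd ℂ) (EE t x)
        = ∑ lam ∈ F, a lam * EE ((lam : Fin ν → ℝ) - t) x := by
      rw [Finset.sum_mul]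
      refine Finset.sum_congr rfl fun lam _ => ?_
      rw [EE_sub_left]
      ring
    have e4 : (∑ lam ∈ F, a lam * EE (lam : Fin ν → ℝ) x)
          * (∑ lam' ∈ F, (starRingEnd ℂ) (a lam' * EE (lam' : Fin ν → ℝ) x))
        = ∑ lam ∈ F, ∑ lam' ∈ F, (a lam * (starRingEnd ℂ) (a lam'))
            * EE ((lam : Fin ν → ℝ) - (lam' : Fin ν → ℝ)) x := by
      rw [Finset.sum_mul_sum]
      refine Finset.sum_congr rfl fun lam _ => Finset.sum_congr rfl fun lam' _ => ?_
      rw [_root_.map_mul, EE_sub_left]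
      ring
    calc (EE t x - ∑ lam ∈ F, a lam * EE (lam : Fin ν → ℝ) x)
          * ((starRingEnd ℂ) (EE t x) - ∑ lam ∈ F, (starRingEnd ℂ) (a lam * EE (lam : Fin ν → ℝ) x))
        = EE t x * (starRingEnd ℂ) (EE t x)
          - EE t x * (∑ lam ∈ F, (starRingEnd ℂ) (a lam * EE (lam : Fin ν → ℝ) x))
          - (∑ lam ∈ F, a lam * EE (lam : Fin ν → ℝ) x) * (starRingEnd ℂ) (EE t x)
          + (∑ lam ∈ F, a lam * EE (lam : Fin ν → ℝ) x)
            * (∑ lam' ∈ F, (starRingEnd ℂ) (a lam' * EE (lam' : Fin ν → ℝ) x)) := by ring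
      _ = _ := by rw [e1, e2, e3, e4]
  have hint2 : Integrable
      (fun x => ∑ lam ∈ F, (starRingEnd ℂ) (a lam) * EE (t - (lam : Fin ν → ℝ)) x) μ :=
    integrable_finset_sum _ (fun lam _ => (integrable_EE μ _).const_mul _)
  have hint3 : Integrable
      (fun x => ∑ lam ∈ F, a lam * EE ((lam : Fin ν → ℝ) - t) x) μ :=
    integrable_finset_sum _ (fun lam _ => (integrable_EE μ _).const_mul _)
  have hint4 : Integrable (fun x => ∑ lam ∈ F, ∑ lam' ∈ F,
      (a lam * (starRingEnd ℂ) (a lam')) * EE ((lam : Fin ν → ℝ) - (lam' : Fin ν → ℝ)) x) μ :=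
    integrable_finset_sum _ (fun lam _ =>
      integrable_finset_sum _ (fun lam' _ => (integrable_EE μ _).const_mul _))
  have hIv : ∫ x, v x * (starRingEnd ℂ) (v x) ∂μ
      = 1 - ∑ lam ∈ F, (a lam * (starRingEnd ℂ) (a lam)) := by
    rw [integral_congr_ae (Filter.Eventually.of_forall hpt)]
    have hA : Integrable (fun x =>
        (1 : ℂ) - ∑ lam ∈ F, (starRingEnd ℂ) (a lam) * EE (t - (lam : Fin ν → ℝ)) x) μ := by
      exact (integrable_const 1).sub hint2
    have hAB : Integrable (fun x =>
        (1 : ℂ) - (∑ lam ∈ F, (starRingEnd ℂ) (a lam) * EE (t - (lam : Fin ν → ℝ)) x)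
          - ∑ lam ∈ F, a lam * EE ((lam : Fin ν → ℝ) - t) x) μ := by
      exact hA.sub hint3
    rw [integral_add hAB hint4, integral_sub hA hint3,
      integral_sub (integrable_const 1) hint2]
    have i1 : ∫ _, (1 : ℂ) ∂μ = 1 := by simp
    have i2 : ∫ x, (∑ lam ∈ F, (starRingEnd ℂ) (a lam) * EE (t - (lam : Fin ν → ℝ)) x) ∂μ
        = ∑ lam ∈ F, (starRingEnd ℂ) (a lam) * a lam := by
      rw [integral_finset_sum _ (fun lam _ => (integrable_EE μ _).const_mul _)]
      exact Finset.sum_congr rfl fun lam _ => by rw [intC_mul_EE]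
    have i3 : ∫ x, (∑ lam ∈ F, a lam * EE ((lam : Fin ν → ℝ) - t) x) ∂μ
        = ∑ lam ∈ F, a lam * (starRingEnd ℂ) (a lam) := by
      rw [integral_finset_sum _ (fun lam _ => (integrable_EE μ _).const_mul _)]
      refine Finset.sum_congr rfl fun lam _ => ?_
      rw [intC_mul_EE]
      congr 1
      rw [ha]
      dsimp only
      rw [← muHat_neg, neg_sub]
    have i4 : ∫ x, (∑ lam ∈ F, ∑ lam' ∈ F, (a lam * (starRingEnd ℂ) (a lam'))
          * EE ((lam : Fin ν → ℝ) - (lam' : Fin ν → ℝ)) x) ∂μ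
        = ∑ lam ∈ F, a lam * (starRingEnd ℂ) (a lam) := by
      rw [integral_finset_sum _ (fun lam _ =>
        integrable_finset_sum _ (fun lam' _ => (integrable_EE μ _).const_mul _))]
      refine Finset.sum_congr rfl fun lam hlam => ?_
      rw [integral_finset_sum _ (fun lam' _ => (integrable_EE μ _).const_mul _)]
      rw [Finset.sum_eq_single_of_mem lam hlam]
      · rw [intC_mul_EE, sub_self, muHat_zero, mul_one]
      · intro lam' _ hne
        rw [intC_mul_EE]
        have : muHatPi μ ((lam : Fin ν → ℝ) - (lam' : Fin ν → ℝ)) = 0 :=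
          horth lam lam.2 lam' lam'.2 (fun hc => hne (Subtype.ext hc).symm)
        rw [this, mul_zero]
    rw [i1, i2, i3, i4]
    have hcomm : ∑ lam ∈ F, (starRingEnd ℂ) (a lam) * a lam
        = ∑ lam ∈ F, a lam * (starRingEnd ℂ) (a lam) :=
      Finset.sum_congr rfl fun lam _ => mul_comm _ _
    rw [hcomm]
    ring
  have hpt2 : ∀ x, v x * (starRingEnd ℂ) (v x) = ((‖v x‖ ^ 2 : ℝ) : ℂ) := by
    intro x
    rw [Complex.mul_conj]
    norm_cast
    rw [Complex.sq_norm]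
  have hsum : (∑ lam ∈ F, (a lam * (starRingEnd ℂ) (a lam)))
      = ((∑ lam ∈ F, ‖a lam‖ ^ 2 : ℝ) : ℂ) := by
    push_cast
    refine Finset.sum_congr rfl fun lam _ => ?_
    rw [Complex.mul_conj]
    norm_cast
    rw [Complex.sq_norm]
  have hC : ∫ x, ((‖v x‖ ^ 2 : ℝ) : ℂ) ∂μ
      = (((1 - ∑ lam ∈ F, ‖a lam‖ ^ 2 : ℝ)) : ℂ) := by
    rw [show (∫ x, ((‖v x‖ ^ 2 : ℝ) : ℂ) ∂μ) = ∫ x, v x * (starRingEnd ℂ) (v x) ∂μ from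
      integral_congr_ae (Filter.Eventually.of_forall fun x => (hpt2 x).symm), hIv, hsum]
    push_cast
    ring
  have hre : (∫ x, ‖v x‖ ^ 2 ∂μ) = 1 - ∑ lam ∈ F, ‖a lam‖ ^ 2 := by
    have h9 : ∫ x, ((‖v x‖ ^ 2 : ℝ) : ℂ) ∂μ = ((∫ x, ‖v x‖ ^ 2 ∂μ : ℝ) : ℂ) :=
      integral_ofReal (𝕜 := ℂ) (f := fun x => ‖v x‖ ^ 2)
    rw [h9] at hC
    exact_mod_cast hC
  have hnn : 0 ≤ ∫ x, ‖v x‖ ^ 2 ∂μ := integral_nonneg fun x => sq_nonneg _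
  rw [hre] at hnn
  have : ∑ lam ∈ F, ‖a lam‖ ^ 2 ≤ 1 := by linarith
  exact this

lemma bessel_summable {Pset : Set (Fin ν → ℝ)} (μ : Measure (Fin ν → ℝ))
    [IsProbabilityMeasure μ]
    (horth : ∀ lam ∈ Pset, ∀ lam' ∈ Pset, lam ≠ lam' → muHatPi μ (lam - lam') = 0)
    (t : Fin ν → ℝ) :
    Summable (fun lam : ↥Pset => ‖muHatPi μ (t - (lam : Fin ν → ℝ))‖ ^ 2) :=
  summable_of_sum_le (fun _ => sq_nonneg _) (fun F => bessel μ horth t F)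

end QFI

open QFI

/-- The functional identity `Q(t) = Σ_{l∈L} |χ_B(t−l)|² Q(R*^{-1}(t−l))` for the
Ruelle transfer operator. -/
theorem Q_functional_identity {ν N : ℕ}
    (R : Matrix (Fin ν) (Fin ν) ℝ)
    (B L : Finset (Fin ν → ℝ))
    (hB : B.card = N) (hL : L.card = N) (hN : 0 < N)
    (h0B : (0 : Fin ν → ℝ) ∈ B) (h0L : (0 : Fin ν → ℝ) ∈ L)
    (hcompat : ∀ n : ℕ, 0 < n → ∀ b ∈ B, ∀ l ∈ L,
      ∃ k : ℤ, (∑ i, (R ^ n).mulVec b i * l i) = (k : ℝ))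
    (hH : ∀ l ∈ L, ∀ l' ∈ L, l ≠ l' →
      ∑ b ∈ B,
        Complex.exp ((((2 : ℝ) * Real.pi * ∑ i, b i * (l i - l' i) : ℝ) : ℂ) * Complex.I) = 0)
    (μ : Measure (Fin ν → ℝ)) [IsProbabilityMeasure μ]
    (hμhat : ∀ t : Fin ν → ℝ,
      muHatPi μ t = chiB B t * muHatPi μ ((R.transpose)⁻¹.mulVec t)) :
    ∀ t : Fin ν → ℝ,
      Qfun μ (PsetL R.transpose L) t
        = ∑ l ∈ L, ‖chiB B (t - l)‖ ^ 2 *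
            Qfun μ (PsetL R.transpose L) ((R.transpose)⁻¹.mulVec (t - l)) := by
  classical
  intro t
  have hsep : ∀ l ∈ L, ∀ l' ∈ L,
      (∀ b ∈ B, ∃ k : ℤ, (∑ i, b i * (l i - l' i)) = (k : ℝ)) → l = l' :=
    fun l hl l' hl' h => sep hB hN hH hl hl' h
  by_cases hinv : IsUnit R.transpose.det
  · -- invertible case
    have horthP := orthP hB hN h0L hcompat hH μ hμhat hinv
    have hsumm : Summable
        (fun lam : ↥(PsetL R.transpose L) => ‖muHatPi μ (t - (lam : Fin ν → ℝ))‖ ^ 2) :=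
      bessel_summable μ horthP t
    let ψ : ({x // x ∈ L} × ↥(PsetL R.transpose L)) → ↥(PsetL R.transpose L) :=
      fun p => ⟨(p.1 : Fin ν → ℝ) + R.transpose.mulVec (p.2 : Fin ν → ℝ),
        mem_P_step p.1.2 p.2.2⟩
    have hinj : Function.Injective ψ := by
      rintro ⟨⟨l, hl⟩, ⟨lam, hlam⟩⟩ ⟨⟨l', hl'⟩, ⟨lam', hlam'⟩⟩ h
      have h' : l + R.transpose.mulVec lam = l' + R.transpose.mulVec lam' :=
        congrArg Subtype.val h
      have hll : l = l' := by
        refine hsep l hl l' hl' fun b hb => ?_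
        obtain ⟨k1, hk1⟩ := dot_int_P hcompat hlam hb
        obtain ⟨k2, hk2⟩ := dot_int_P hcompat hlam' hb
        refine ⟨k2 - k1, ?_⟩
        have hd : l - l' = R.transpose.mulVec lam' - R.transpose.mulVec lam := by
          rw [sub_eq_sub_iff_add_eq_add, h']
          exact add_comm _ _
        have : (∑ i, b i * (l i - l' i)) = b ⬝ᵥ (l - l') := rfl
        rw [this, hd, dotProduct_sub, Matrix.dotProduct_mulVec,
          Matrix.vecMul_transpose, Matrix.dotProduct_mulVec, Matrix.vecMul_transpose,
          hk1, hk2]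
        push_cast
        ring
      subst hll
      have hmv : R.transpose.mulVec lam = R.transpose.mulVec lam' := by
        have := h'
        exact add_left_cancel this
      have hlamlam : lam = lam' := by
        have h2 := congrArg (fun w => (R.transpose)⁻¹.mulVec w) hmv
        simpa [Matrix.mulVec_mulVec, Matrix.nonsing_inv_mul _ hinv,
          Matrix.one_mulVec] using h2
      rw [Prod.mk.injEq]
      exact ⟨Subtype.ext rfl, Subtype.ext hlamlam⟩
    have hsurj : Function.Surjective ψ := by
      rintro ⟨lam, hlam⟩
      obtain ⟨l, hl, lam', hlam', heq⟩ := mem_P_decomp h0L hlam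
      exact ⟨(⟨l, hl⟩, ⟨lam', hlam'⟩), Subtype.ext heq.symm⟩
    let e := Equiv.ofBijective ψ ⟨hinj, hsurj⟩
    have hpt : ∀ (p : {x // x ∈ L} × ↥(PsetL R.transpose L)),
        ‖muHatPi μ (t - ((ψ p) : Fin ν → ℝ))‖ ^ 2
          = ‖chiB B (t - (p.1 : Fin ν → ℝ))‖ ^ 2
            * ‖muHatPi μ ((R.transpose)⁻¹.mulVec (t - (p.1 : Fin ν → ℝ))
                - (p.2 : Fin ν → ℝ))‖ ^ 2 := by
      rintro ⟨⟨l, hl⟩, ⟨lam, hlam⟩⟩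
      have h1 : t - (l + R.transpose.mulVec lam) = (t - l) - R.transpose.mulVec lam := by
        abel
      have h2 : (R.transpose)⁻¹.mulVec ((t - l) - R.transpose.mulVec lam)
          = (R.transpose)⁻¹.mulVec (t - l) - lam := by
        rw [Matrix.mulVec_sub, Matrix.mulVec_mulVec, Matrix.nonsing_inv_mul _ hinv,
          Matrix.one_mulVec]
      show ‖muHatPi μ (t - (l + R.transpose.mulVec lam))‖ ^ 2 = _
      rw [h1, hμhat ((t - l) - R.transpose.mulVec lam),
        chiB_shift hcompat hlam (t - l), h2, norm_mul, mul_pow]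
    have hsumm2 : Summable (fun p : {x // x ∈ L} × ↥(PsetL R.transpose L) =>
        ‖chiB B (t - (p.1 : Fin ν → ℝ))‖ ^ 2
          * ‖muHatPi μ ((R.transpose)⁻¹.mulVec (t - (p.1 : Fin ν → ℝ))
              - (p.2 : Fin ν → ℝ))‖ ^ 2) := by
      refine Summable.congr ((Equiv.summable_iff e).mpr hsumm) fun p => ?_
      exact hpt p
    calc Qfun μ (PsetL R.transpose L) t
        = ∑' (lam : ↥(PsetL R.transpose L)), ‖muHatPi μ (t - (lam : Fin ν → ℝ))‖ ^ 2 := rfl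
      _ = ∑' (p : {x // x ∈ L} × ↥(PsetL R.transpose L)),
            ‖muHatPi μ (t - ((e p) : Fin ν → ℝ))‖ ^ 2 :=
          (Equiv.tsum_eq e (fun lam => ‖muHatPi μ (t - (lam : Fin ν → ℝ))‖ ^ 2)).symm
      _ = ∑' (p : {x // x ∈ L} × ↥(PsetL R.transpose L)),
            ‖chiB B (t - (p.1 : Fin ν → ℝ))‖ ^ 2
              * ‖muHatPi μ ((R.transpose)⁻¹.mulVec (t - (p.1 : Fin ν → ℝ))
                  - (p.2 : Fin ν → ℝ))‖ ^ 2 := tsum_congr hpt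
      _ = ∑' (l : {x // x ∈ L}), ∑' (lam : ↥(PsetL R.transpose L)),
            ‖chiB B (t - (l : Fin ν → ℝ))‖ ^ 2
              * ‖muHatPi μ ((R.transpose)⁻¹.mulVec (t - (l : Fin ν → ℝ))
                  - (lam : Fin ν → ℝ))‖ ^ 2 :=
          hsumm2.tsum_prod' (fun l => hsumm2.prod_factor l)
      _ = ∑ l ∈ L, ‖chiB B (t - l)‖ ^ 2 *
            Qfun μ (PsetL R.transpose L) ((R.transpose)⁻¹.mulVec (t - l)) := by
          rw [tsum_fintype]
          rw [← Finset.sum_coe_sort L (fun l => ‖chiB B (t - l)‖ ^ 2 *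
            Qfun μ (PsetL R.transpose L) ((R.transpose)⁻¹.mulVec (t - l)))]
          refine Finset.sum_congr rfl fun l _ => ?_
          rw [tsum_mul_left]
          rfl
  · -- non-invertible case
    have hRt0 : (R.transpose)⁻¹ = 0 := Matrix.nonsing_inv_apply_not_isUnit _ hinv
    have hmu : ∀ s, muHatPi μ s = chiB B s := by
      intro s
      rw [hμhat s, hRt0, Matrix.zero_mulVec, muHat_zero, mul_one]
    have hQ : ∀ s, Qfun μ (PsetL R.transpose L) s
        = ∑' lam : ↥(PsetL R.transpose L), ‖chiB B (s - (lam : Fin ν → ℝ))‖ ^ 2 := by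
      intro s
      show (∑' lam : ↥(PsetL R.transpose L), ‖muHatPi μ (s - (lam : Fin ν → ℝ))‖ ^ 2) = _
      exact tsum_congr fun lam => by rw [hmu]
    have hQMF := QMF hB hL hN hH
    set W : Set (Fin ν → ℝ) := (fun lam => R.transpose.mulVec lam) '' (PsetL R.transpose L)
      with hW
    let φ : ({x // x ∈ L} × ↥W) → ↥(PsetL R.transpose L) := fun p =>
      ⟨(p.1 : Fin ν → ℝ) + (p.2 : Fin ν → ℝ), by
        obtain ⟨lam, hlam, hl⟩ := p.2.2
        rw [← hl]
        exact mem_P_step p.1.2 hlam⟩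
    have hφinj : Function.Injective φ := by
      rintro ⟨⟨l, hl⟩, ⟨w, hwmem⟩⟩ ⟨⟨l', hl'⟩, ⟨w', hwmem'⟩⟩ h
      obtain ⟨lam, hlam, rfl⟩ := hwmem
      obtain ⟨lam', hlam', rfl⟩ := hwmem'
      have h' : l + R.transpose.mulVec lam = l' + R.transpose.mulVec lam' :=
        congrArg Subtype.val h
      have hll : l = l' := by
        refine hsep l hl l' hl' fun b hb => ?_
        obtain ⟨k1, hk1⟩ := dot_int_P hcompat hlam hb
        obtain ⟨k2, hk2⟩ := dot_int_P hcompat hlam' hb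
        refine ⟨k2 - k1, ?_⟩
        have hd : l - l' = R.transpose.mulVec lam' - R.transpose.mulVec lam := by
          rw [sub_eq_sub_iff_add_eq_add, h']
          exact add_comm _ _
        have : (∑ i, b i * (l i - l' i)) = b ⬝ᵥ (l - l') := rfl
        rw [this, hd, dotProduct_sub, Matrix.dotProduct_mulVec,
          Matrix.vecMul_transpose, Matrix.dotProduct_mulVec, Matrix.vecMul_transpose,
          hk1, hk2]
        push_cast
        ring
      subst hll
      have hww : R.transpose.mulVec lam = R.transpose.mulVec lam' := add_left_cancel h'
      rw [Prod.mk.injEq]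
      exact ⟨Subtype.ext rfl, Subtype.ext hww⟩
    have hφsurj : Function.Surjective φ := by
      rintro ⟨lam, hlam⟩
      obtain ⟨l, hl, lam', hlam', heq⟩ := mem_P_decomp h0L hlam
      exact ⟨(⟨l, hl⟩, ⟨R.transpose.mulVec lam', ⟨lam', hlam', rfl⟩⟩), Subtype.ext heq.symm⟩
    let e := Equiv.ofBijective φ ⟨hφinj, hφsurj⟩
    have hshift : ∀ (s l : Fin ν → ℝ) (w : ↥W),
        chiB B (s - (l + (w : Fin ν → ℝ))) = chiB B (s - l) := by
      rintro s l ⟨w, lam, hlam, rfl⟩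
      show chiB B (s - (l + R.transpose.mulVec lam)) = _
      rw [show s - (l + R.transpose.mulVec lam) = (s - l) - R.transpose.mulVec lam by abel]
      exact chiB_shift hcompat hlam (s - l)
    by_cases hWfin : W.Finite
    · haveI := hWfin.fintype
      have hQval : ∀ s, Qfun μ (PsetL R.transpose L) s
          = (Fintype.card ↥W : ℝ) * ∑ l ∈ L, ‖chiB B (s - l)‖ ^ 2 := by
        intro s
        rw [hQ s]
        rw [← Equiv.tsum_eq e (fun lam : ↥(PsetL R.transpose L) =>
          ‖chiB B (s - (lam : Fin ν → ℝ))‖ ^ 2)]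
        rw [tsum_fintype]
        rw [Fintype.sum_prod_type]
        have hterm : ∀ (l : {x // x ∈ L}) (w : ↥W),
            ‖chiB B (s - ((e (l, w)) : Fin ν → ℝ))‖ ^ 2
              = ‖chiB B (s - (l : Fin ν → ℝ))‖ ^ 2 := by
          intro l w
          rw [show ((e (l, w)) : Fin ν → ℝ) = (l : Fin ν → ℝ) + (w : Fin ν → ℝ) from rfl,
            hshift]
        calc ∑ l : {x // x ∈ L}, ∑ w : ↥W, ‖chiB B (s - ((e (l, w)) : Fin ν → ℝ))‖ ^ 2
            = ∑ l : {x // x ∈ L}, ∑ _w : ↥W, ‖chiB B (s - (l : Fin ν → ℝ))‖ ^ 2 :=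
              Finset.sum_congr rfl fun l _ => Finset.sum_congr rfl fun w _ => hterm l w
          _ = ∑ l : {x // x ∈ L}, (Fintype.card ↥W : ℝ) * ‖chiB B (s - (l : Fin ν → ℝ))‖ ^ 2 := by
              refine Finset.sum_congr rfl fun l _ => ?_
              rw [Finset.sum_const, Finset.card_univ, nsmul_eq_mul]
          _ = (Fintype.card ↥W : ℝ) * ∑ l ∈ L, ‖chiB B (s - l)‖ ^ 2 := by
              rw [← Finset.mul_sum]
              congr 1
              exact Finset.sum_coe_sort L (fun l => ‖chiB B (s - l)‖ ^ 2)
      rw [hQval t]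
      have hone : ∀ l ∈ L, Qfun μ (PsetL R.transpose L) ((R.transpose)⁻¹.mulVec (t - l))
          = (Fintype.card ↥W : ℝ) := by
        intro l _
        rw [hRt0, Matrix.zero_mulVec, hQval 0, hQMF 0, mul_one]
      rw [show (∑ l ∈ L, ‖chiB B (t - l)‖ ^ 2 *
          Qfun μ (PsetL R.transpose L) ((R.transpose)⁻¹.mulVec (t - l)))
          = ∑ l ∈ L, ‖chiB B (t - l)‖ ^ 2 * (Fintype.card ↥W : ℝ) from
        Finset.sum_congr rfl fun l hl => by rw [hone l hl]]
      rw [← Finset.sum_mul]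
      ring
    · haveI : Infinite ↥W := Set.infinite_coe_iff.mpr hWfin
      have hQ0 : ∀ s, Qfun μ (PsetL R.transpose L) s = 0 := by
        intro s
        rw [hQ s]
        apply tsum_eq_zero_of_not_summable
        intro hs
        have hex : ∃ l ∈ L, ‖chiB B (s - l)‖ ^ 2 ≠ 0 := by
          by_contra hall
          push_neg at hall
          have h1 := hQMF s
          rw [Finset.sum_eq_zero hall] at h1
          exact one_ne_zero h1.symm
        obtain ⟨l0, hl0, hc⟩ := hex
        have hs2 : Summable ((fun lam : ↥(PsetL R.transpose L) =>
            ‖chiB B (s - (lam : Fin ν → ℝ))‖ ^ 2) ∘ e) := (Equiv.summable_iff e).mpr hs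
        have hs3 : Summable (fun w : ↥W =>
            ‖chiB B (s - ((e (⟨l0, hl0⟩, w)) : Fin ν → ℝ))‖ ^ 2) := hs2.prod_factor ⟨l0, hl0⟩
        have hs4 : Summable (fun _ : ↥W => ‖chiB B (s - l0)‖ ^ 2) := by
          refine hs3.congr fun w => ?_
          rw [show ((e (⟨l0, hl0⟩, w)) : Fin ν → ℝ) = l0 + (w : Fin ν → ℝ) from rfl, hshift]
        have h5 := hs4.tendsto_cofinite_zero
        have h6 : Filter.Tendsto (fun _ : ↥W => ‖chiB B (s - l0)‖ ^ 2)
            Filter.cofinite (nhds (‖chiB B (s - l0)‖ ^ 2)) := tendsto_const_nhds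
        exact hc (tendsto_nhds_unique h6 h5)
      rw [hQ0 t]
      exact (Finset.sum_eq_zero fun l _ => by rw [hQ0, mul_zero]).symm
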